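/- For every integer k, there is a matroid M in ℰ₃ containing neither I₃ nor F₇ as an induced restriction such that χ(M) ≥ k. -/

import Mathlib

/-- A simple binary matroid `M = (E, G)`: a dimension `n` together with a ground set `E`
of nonzero vectors of `𝔽₂ⁿ` (the points of `G = 𝔽₂ⁿ \ {0}`). -/
structure BinMatroid where
  dim : ℕ
  E : Set (Fin dim → ZMod 2)
  zero_not_mem : 0 ∉ E

namespace BinMatroid

/-- `M.HasIR N` : `M` contains `N` as an induced restriction, i.e. there is an injective
linear map `φ` with `φ(E(N)) = E(M) ∩ (φ(G') \ {0})`. -/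
def HasIR (M N : BinMatroid) : Prop :=
  ∃ φ : (Fin N.dim → ZMod 2) →ₗ[ZMod 2] (Fin M.dim → ZMod 2),
    Function.Injective φ ∧ φ '' N.E = M.E ∩ (Set.range φ \ {0})

/-- Isomorphism of binary matroids: a bijective induced embedding. -/
def Iso (M N : BinMatroid) : Prop :=
  ∃ φ : (Fin N.dim → ZMod 2) →ₗ[ZMod 2] (Fin M.dim → ZMod 2),
    Function.Bijective φ ∧ φ '' N.E = M.E ∩ (Set.range φ \ {0})

/-- The critical number of the induced restriction of the ground set `E` to the flat of
the subspace `F`: the least `k` such that some flat of `F` of dimension `dim F - k`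
is disjoint from `E`. -/
noncomputable def critNumRes {n : ℕ} (E : Set (Fin n → ZMod 2))
    (F : Submodule (ZMod 2) (Fin n → ZMod 2)) : ℕ :=
  sInf {k : ℕ | ∃ W : Submodule (ZMod 2) (Fin n → ZMod 2), W ≤ F ∧
    Module.finrank (ZMod 2) W = Module.finrank (ZMod 2) F - k ∧
    Disjoint ((W : Set (Fin n → ZMod 2)) \ {0}) E}

/-- The critical number `χ(M)`: the least `k ≥ 0` such that some flat of dimension
`n - k` is disjoint from `E`. -/
noncomputable def critNum (M : BinMatroid) : ℕ :=
  sInf {k : ℕ | ∃ W : Submodule (ZMod 2) (Fin M.dim → ZMod 2),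
    Module.finrank (ZMod 2) W = M.dim - k ∧
    Disjoint ((W : Set (Fin M.dim → ZMod 2)) \ {0}) M.E}

/-- `M ∈ ℰ_k` : every induced restriction of `M` to a flat of dimension at least `k`
has even size. -/
def MemE (k : ℕ) (M : BinMatroid) : Prop :=
  ∀ W : Submodule (ZMod 2) (Fin M.dim → ZMod 2),
    k ≤ Module.finrank (ZMod 2) W →
    Even (M.E ∩ ((W : Set (Fin M.dim → ZMod 2)) \ {0})).ncard

/-- `M` is full-rank: `E` spans `𝔽₂ⁿ`. -/
def FullRank (M : BinMatroid) : Prop :=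
  Submodule.span (ZMod 2) M.E = ⊤

/-- `M` is (isomorphic to) the doubling of `M₀`: `M₀` is identified, via an injective
linear map `φ`, with the restriction of `M` to a hyperplane `H = range φ`, there is
`w ∈ G − (E ∪ H)`, and `E = (E ∩ H) ∪ (w + (E ∩ H))`. -/
def IsDoublingOf (M M₀ : BinMatroid) : Prop :=
  M.dim = M₀.dim + 1 ∧
  ∃ φ : (Fin M₀.dim → ZMod 2) →ₗ[ZMod 2] (Fin M.dim → ZMod 2),
    Function.Injective φ ∧
    ∃ w : Fin M.dim → ZMod 2, w ≠ 0 ∧ w ∉ Set.range φ ∧ w ∉ M.E ∧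
      M.E = φ '' M₀.E ∪ (fun x => w + x) '' (φ '' M₀.E)

/-- `M` arises from `M₀` by a (possibly empty) sequence of doublings. -/
def ArisesByDoublings (M M₀ : BinMatroid) : Prop :=
  ∃ M' : BinMatroid,
    Relation.ReflTransGen (fun A B => IsDoublingOf B A) M₀ M' ∧ M.Iso M'

/-- `M` is (a copy of) `AG°(t−1, 2)`, the matroid `((G − H) ∪ {x}, G)` with `H` a
hyperplane of `G` and `x ∈ H`, where `t = M.dim`. -/
def IsAGo (M : BinMatroid) : Prop :=
  ∃ H : Submodule (ZMod 2) (Fin M.dim → ZMod 2),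
    Module.finrank (ZMod 2) H + 1 = M.dim ∧
    ∃ x ∈ (H : Set (Fin M.dim → ZMod 2)) \ {0},
      M.E = ({v | v ≠ 0} \ (H : Set (Fin M.dim → ZMod 2))) ∪ {x}

/-- `M` is a Bose–Burton geometry of order `k`: `E = G − F` for a flat `F` of
dimension `n − k`. -/
def IsBoseBurton (M : BinMatroid) (k : ℕ) : Prop :=
  k ≤ M.dim ∧ ∃ W : Submodule (ZMod 2) (Fin M.dim → ZMod 2),
    Module.finrank (ZMod 2) W = M.dim - k ∧
    M.E = {v | v ≠ 0} \ (W : Set (Fin M.dim → ZMod 2))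

/-- The ground set `E` (of a matroid of the ambient dimension `n`) is the semidoubling
of its restriction to the hyperplane `H₁` with respect to the hyperplane `H₀` of `H₁`:
there is `w ∈ G − (E ∪ H₁)` with `|{x, x+w} ∩ E| ∈ {0, 2}` for every `x ∈ H₀` and
`|{x, x+w} ∩ E| = 1` for every `x ∈ H₁ − H₀`. -/
def IsSemidoublingWrt {n : ℕ} (E : Set (Fin n → ZMod 2))
    (H₁ H₀ : Submodule (ZMod 2) (Fin n → ZMod 2)) : Prop :=
  H₀ ≤ H₁ ∧ Module.finrank (ZMod 2) H₀ + 1 = Module.finrank (ZMod 2) H₁ ∧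
  ∃ w : Fin n → ZMod 2, w ≠ 0 ∧ w ∉ H₁ ∧ w ∉ E ∧
    (∀ x ∈ (H₀ : Set (Fin n → ZMod 2)) \ {0},
      (({x, x + w} : Set (Fin n → ZMod 2)) ∩ E).ncard = 0 ∨
      (({x, x + w} : Set (Fin n → ZMod 2)) ∩ E).ncard = 2) ∧
    (∀ x ∈ (H₁ : Set (Fin n → ZMod 2)) \ (H₀ : Set (Fin n → ZMod 2)),
      (({x, x + w} : Set (Fin n → ZMod 2)) ∩ E).ncard = 1)

/-- The ground set `E` is a semidoubling of its restriction to the hyperplane `H₁`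
(with respect to some hyperplane `H₀` of `H₁`). -/
def IsSemidoublingOfRes {n : ℕ} (E : Set (Fin n → ZMod 2))
    (H₁ : Submodule (ZMod 2) (Fin n → ZMod 2)) : Prop :=
  ∃ H₀ : Submodule (ZMod 2) (Fin n → ZMod 2), IsSemidoublingWrt E H₁ H₀

/-- `M` is (isomorphic to) a semidoubling of `M₀`: `M₀` is identified, via an injective
linear map `φ`, with the restriction of `M` to the hyperplane `range φ`, and `M` is a
semidoubling of that restriction. -/
def IsSemidoublingOf (M M₀ : BinMatroid) : Prop :=
  M.dim = M₀.dim + 1 ∧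
  ∃ φ : (Fin M₀.dim → ZMod 2) →ₗ[ZMod 2] (Fin M.dim → ZMod 2),
    Function.Injective φ ∧
    φ '' M₀.E = M.E ∩ (Set.range φ \ {0}) ∧
    IsSemidoublingOfRes M.E (LinearMap.range φ)

/-- `M` arises from `M₀` by a (possibly empty) sequence of semidoublings. -/
def ArisesBySemidoublings (M M₀ : BinMatroid) : Prop :=
  ∃ M' : BinMatroid,
    Relation.ReflTransGen (fun A B => IsSemidoublingOf B A) M₀ M' ∧ M.Iso M'

end BinMatroid

/-- A triangle of `G`: a set `{x, y, z}` of three distinct nonzero vectors with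
`x + y + z = 0`. -/
def IsTriangle {n : ℕ} (T : Set (Fin n → ZMod 2)) : Prop :=
  ∃ x y z : Fin n → ZMod 2, x ≠ 0 ∧ y ≠ 0 ∧ z ≠ 0 ∧
    x ≠ y ∧ x ≠ z ∧ y ≠ z ∧ x + y + z = 0 ∧ T = {x, y, z}

/-- `I₃`, the claw: the 3-dimensional matroid whose ground set is the three standard
basis vectors of `𝔽₂³`. -/
def I3 : BinMatroid where
  dim := 3
  E := Set.range fun i : Fin 3 => (Pi.single i 1 : Fin 3 → ZMod 2)
  zero_not_mem := by
    rintro ⟨i, hi⟩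
    have := congrFun hi i
    simp [Pi.single_eq_same] at this

/-- `F₇`, the Fano plane: the 3-dimensional matroid whose ground set is all of
`𝔽₂³ \ {0}`. -/
def F7 : BinMatroid where
  dim := 3
  E := {v | v ≠ 0}
  zero_not_mem := by simp

/-- `K₅`: the 4-dimensional matroid whose ground set is the set of vectors of Hamming
weight 1 or 2 in `𝔽₂⁴`. -/
def K5 : BinMatroid where
  dim := 4
  E := {v | hammingNorm v = 1 ∨ hammingNorm v = 2}
  zero_not_mem := by
    intro h
    simp only [Set.mem_setOf_eq, hammingNorm_zero] at h
    omega


section Stmt2Aux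
open Finset Module

section AuxStmt2

lemma even_card_of_invol {α : Type*} [DecidableEq α] (s : Finset α) (i : α → α) :
    (∀ a ∈ s, i a ∈ s) → (∀ a ∈ s, i (i a) = a) → (∀ a ∈ s, i a ≠ a) → Even s.card := by
  induction s using Finset.strongInduction with
  | _ s ih =>
    intro h1 h2 h3
    rcases s.eq_empty_or_nonempty with rfl | ⟨a, ha⟩
    · simp
    · have hia : i a ∈ s := h1 a ha
      have hne : i a ≠ a := h3 a ha
      have hmem : i a ∈ s.erase a := Finset.mem_erase.2 ⟨hne, hia⟩
      set t := (s.erase a).erase (i a) with ht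
      have hsub : t ⊂ s :=
        lt_of_le_of_lt (Finset.erase_subset _ _) (Finset.erase_ssubset ha)
      have hmt : ∀ x ∈ t, x ∈ s ∧ x ≠ a ∧ x ≠ i a := by
        intro x hx
        rw [ht, Finset.mem_erase, Finset.mem_erase] at hx
        exact ⟨hx.2.2, hx.2.1, hx.1⟩
      have hteven : Even t.card := by
        refine ih t hsub (fun x hx => ?_) (fun x hx => h2 x (hmt x hx).1)
          (fun x hx => h3 x (hmt x hx).1)
        obtain ⟨hxs, hxa, hxia⟩ := hmt x hx
        rw [ht, Finset.mem_erase, Finset.mem_erase]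
        refine ⟨fun h => hxa ?_, fun h => hxia ?_, h1 x hxs⟩
        · rw [← h2 x hxs, h, h2 a ha]
        · rw [← h2 x hxs, h]
      have hc1 : t.card + 1 = (s.erase a).card := Finset.card_erase_add_one hmem
      have hc2 : (s.erase a).card + 1 = s.card := Finset.card_erase_add_one ha
      obtain ⟨r, hr⟩ := hteven
      exact ⟨r + 1, by omega⟩

variable (k : ℕ)

/-- The quadratic form `Q(x) = ∑ x_i x_{k+i}` on `𝔽₂^{2k}`. -/
def QF (x : Fin (k + k) → ZMod 2) : ZMod 2 :=
  ∑ i : Fin k, x (Fin.castAdd k i) * x (Fin.natAdd k i)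

/-- The associated symplectic bilinear form. -/
def BF : LinearMap.BilinForm (ZMod 2) (Fin (k + k) → ZMod 2) :=
  LinearMap.mk₂ (ZMod 2)
    (fun x y => ∑ i : Fin k, (x (Fin.castAdd k i) * y (Fin.natAdd k i)
      + x (Fin.natAdd k i) * y (Fin.castAdd k i)))
    (fun x x' y => by
      rw [← Finset.sum_add_distrib]; exact Finset.sum_congr rfl fun i _ => by
        simp only [Pi.add_apply]; ring)
    (fun c x y => by
      rw [Finset.smul_sum]; exact Finset.sum_congr rfl fun i _ => by
        simp only [Pi.smul_apply, smul_eq_mul]; ring)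
    (fun x y y' => by
      rw [← Finset.sum_add_distrib]; exact Finset.sum_congr rfl fun i _ => by
        simp only [Pi.add_apply]; ring)
    (fun c x y => by
      rw [Finset.smul_sum]; exact Finset.sum_congr rfl fun i _ => by
        simp only [Pi.smul_apply, smul_eq_mul]; ring)

lemma QF_zero : QF k 0 = 0 := by simp [QF]

lemma QF_add (x y : Fin (k + k) → ZMod 2) :
    QF k (x + y) = QF k x + QF k y + BF k x y := by
  simp only [QF, BF, LinearMap.mk₂_apply, ← Finset.sum_add_distrib]
  exact Finset.sum_congr rfl fun i _ => by simp only [Pi.add_apply]; ring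

lemma BF_symm (x y : Fin (k + k) → ZMod 2) : BF k x y = BF k y x := by
  simp only [BF, LinearMap.mk₂_apply]
  exact Finset.sum_congr rfl fun i _ => by ring

lemma BF_isRefl : (BF k).IsRefl := fun x y h => by rw [BF_symm]; exact h

lemma cast_ne_nat (i j : Fin k) : Fin.castAdd k i ≠ Fin.natAdd k j := by
  simp only [ne_eq, Fin.ext_iff, Fin.coe_castAdd, Fin.coe_natAdd]
  omega

lemma BF_single_nat (x : Fin (k + k) → ZMod 2) (i : Fin k) :
    BF k x (Pi.single (Fin.natAdd k i) 1) = x (Fin.castAdd k i) := by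
  simp only [BF, LinearMap.mk₂_apply]
  rw [Finset.sum_eq_single i]
  · rw [Pi.single_eq_same, Pi.single_eq_of_ne (cast_ne_nat k i i), mul_one, mul_zero, add_zero]
  · intro j _ hj
    have h1 : Fin.natAdd k j ≠ Fin.natAdd k i := by
      simp only [ne_eq, Fin.ext_iff, Fin.coe_natAdd]
      exact fun h => hj (Fin.ext (by omega))
    rw [Pi.single_eq_of_ne h1, Pi.single_eq_of_ne (cast_ne_nat k j i), mul_zero, mul_zero,
      add_zero]
  · intro h; exact absurd (Finset.mem_univ i) h

lemma BF_single_cast (x : Fin (k + k) → ZMod 2) (i : Fin k) :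
    BF k x (Pi.single (Fin.castAdd k i) 1) = x (Fin.natAdd k i) := by
  simp only [BF, LinearMap.mk₂_apply]
  rw [Finset.sum_eq_single i]
  · rw [Pi.single_eq_same, Pi.single_eq_of_ne (Ne.symm (cast_ne_nat k i i)), mul_one, mul_zero,
      zero_add]
  · intro j _ hj
    have h1 : Fin.castAdd k j ≠ Fin.castAdd k i := by
      simp only [ne_eq, Fin.ext_iff, Fin.coe_castAdd]
      exact fun h => hj (Fin.ext h)
    rw [Pi.single_eq_of_ne h1, Pi.single_eq_of_ne (Ne.symm (cast_ne_nat k i j)), mul_zero,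
      mul_zero, add_zero]
  · intro h; exact absurd (Finset.mem_univ i) h

lemma BF_nondeg : (BF k).Nondegenerate := by
  have hL : LinearMap.SeparatingLeft (BF k) := by
    intro x hx
    funext j
    simp only [Pi.zero_apply]
    induction j using Fin.addCases with
    | left i => rw [← BF_single_nat k x i]; exact hx _
    | right i => rw [← BF_single_cast k x i]; exact hx _
  exact ⟨hL, fun y hy => hL y fun x => by rw [BF_symm]; exact hy x⟩

end AuxStmt2


lemma QF_even (k : ℕ) (W : Submodule (ZMod 2) (Fin (k + k) → ZMod 2))
    (hW : 3 ≤ finrank (ZMod 2) W) :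
    Even ({v | QF k v = 1} ∩ ((W : Set (Fin (k + k) → ZMod 2)) \ {0})).ncard := by
  classical
  set F : Finset (Fin (k + k) → ZMod 2) := Finset.univ.filter (· ∈ W) with hF
  have hFmem : ∀ x, x ∈ F ↔ x ∈ W := by intro x; simp [hF]
  have hset : {v | QF k v = 1} ∩ ((W : Set (Fin (k + k) → ZMod 2)) \ {0})
      = ↑(F.filter fun x => QF k x = 1) := by
    ext x
    simp only [Set.mem_inter_iff, Set.mem_setOf_eq, Set.mem_diff, Set.mem_singleton_iff,
      Finset.coe_filter, SetLike.mem_coe, hFmem, Set.mem_setOf_eq]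
    constructor
    · rintro ⟨h1, h2, _⟩; exact ⟨h2, h1⟩
    · rintro ⟨h1, h2⟩
      refine ⟨h2, h1, fun h => ?_⟩
      rw [h] at h2
      simp [QF] at h2
  rw [hset, Set.ncard_coe_finset]
  -- key : each coordinate-pair count is even
  have key : ∀ i : Fin k, Even ((F.filter fun x =>
      x (Fin.castAdd k i) = 1 ∧ x (Fin.natAdd k i) = 1)).card := by
    intro i
    set f : (Fin (k + k) → ZMod 2) →ₗ[ZMod 2] ZMod 2 := LinearMap.proj (Fin.castAdd k i)
    set g : (Fin (k + k) → ZMod 2) →ₗ[ZMod 2] ZMod 2 := LinearMap.proj (Fin.natAdd k i)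
    set Φ : W →ₗ[ZMod 2] ZMod 2 × ZMod 2 := (f.comp W.subtype).prod (g.comp W.subtype) with hΦ
    have hker : 0 < finrank (ZMod 2) (LinearMap.ker Φ) := by
      have h1 := LinearMap.finrank_range_add_finrank_ker Φ
      have h2 : finrank (ZMod 2) (LinearMap.range Φ) ≤ 2 := by
        refine le_trans (Submodule.finrank_le _) ?_
        rw [Module.finrank_prod, Module.finrank_self]
      omega
    have : Nontrivial (LinearMap.ker Φ) := Module.nontrivial_of_finrank_pos hker
    obtain ⟨u, hu⟩ := exists_ne (0 : LinearMap.ker Φ)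
    -- extract the ambient vector h₀
    set h₀ : Fin (k + k) → ZMod 2 := ((u : W) : Fin (k + k) → ZMod 2) with hh₀
    have h₀W : h₀ ∈ W := SetLike.coe_mem _
    have h₀ne : h₀ ≠ 0 := by
      intro h
      apply hu
      have : (u : W) = 0 := by
        apply Subtype.ext; exact h
      exact Subtype.ext this
    have hΦ0 : Φ (u : W) = 0 := u.2
    have hf0 : h₀ (Fin.castAdd k i) = 0 := congrArg Prod.fst hΦ0
    have hg0 : h₀ (Fin.natAdd k i) = 0 := congrArg Prod.snd hΦ0
    -- involution x ↦ x + h₀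
    apply even_card_of_invol _ (fun x => x + h₀)
    · intro x hx
      rw [Finset.mem_filter] at hx ⊢
      obtain ⟨hxF, hx1, hx2⟩ := hx
      refine ⟨(hFmem _).2 (W.add_mem ((hFmem _).1 hxF) h₀W), ?_, ?_⟩
      · rw [Pi.add_apply, hf0, add_zero]; exact hx1
      · rw [Pi.add_apply, hg0, add_zero]; exact hx2
    · intro x _
      have : ∀ a : ZMod 2, a + a = 0 := by decide
      funext j
      show x j + h₀ j + h₀ j = x j
      rw [add_assoc, this, add_zero]
    · intro x _ h
      apply h₀ne
      have := congrArg (fun y => y - x) h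
      simpa using this
  -- now the parity computation in ZMod 2
  have hcast : (((F.filter fun x => QF k x = 1)).card : ZMod 2) = 0 := by
    rw [Finset.natCast_card_filter]
    have h1 : ∀ x ∈ F, (if QF k x = 1 then (1 : ZMod 2) else 0) = QF k x := by
      intro x _
      have : ∀ a : ZMod 2, (if a = 1 then (1 : ZMod 2) else 0) = a := by decide
      exact this _
    rw [Finset.sum_congr rfl h1]
    have h2 : ∀ x ∈ F, QF k x = ∑ i : Fin k,
        (if x (Fin.castAdd k i) = 1 ∧ x (Fin.natAdd k i) = 1 then (1 : ZMod 2) else 0) := by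
      intro x _
      refine Finset.sum_congr rfl fun i _ => ?_
      have : ∀ a b : ZMod 2, a * b = (if a = 1 ∧ b = 1 then (1 : ZMod 2) else 0) := by decide
      exact this _ _
    rw [Finset.sum_congr rfl h2, Finset.sum_comm]
    refine Finset.sum_eq_zero fun i _ => ?_
    rw [Finset.sum_boole]
    obtain ⟨r, hr⟩ := key i
    have h2 : ∀ a : ZMod 2, a + a = 0 := by decide
    rw [hr, Nat.cast_add]
    exact h2 _
  rw [ZMod.natCast_eq_zero_iff] at hcast
  exact (even_iff_two_dvd).2 hcast


lemma QF_rank (k : ℕ) (W : Submodule (ZMod 2) (Fin (k + k) → ZMod 2))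
    (hdisj : Disjoint ((W : Set (Fin (k + k) → ZMod 2)) \ {0}) {v | QF k v = 1}) :
    finrank (ZMod 2) W ≤ k := by
  have hQ0 : ∀ x ∈ W, QF k x = 0 := by
    intro x hx
    rcases eq_or_ne x 0 with rfl | hne
    · simp [QF]
    · have hxE : x ∉ {v | QF k v = 1} :=
        fun hxE => Set.disjoint_left.mp hdisj ⟨hx, hne⟩ hxE
      have h2 : ∀ a : ZMod 2, a ≠ 1 → a = 0 := by decide
      exact h2 _ hxE
  have hBW : W ≤ (BF k).orthogonal W := by
    intro y hy
    rw [LinearMap.BilinForm.mem_orthogonal_iff]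
    intro z hz
    have h := QF_add k z y
    rw [hQ0 _ (W.add_mem hz hy), hQ0 _ hz, hQ0 _ hy] at h
    simpa using h.symm
  have hfr := LinearMap.BilinForm.finrank_orthogonal (BF_nondeg k) W
  have hmono : finrank (ZMod 2) W ≤ finrank (ZMod 2) ((BF k).orthogonal W) :=
    Submodule.finrank_mono hBW
  have hle : finrank (ZMod 2) W ≤ finrank (ZMod 2) (Fin (k + k) → ZMod 2) :=
    Submodule.finrank_le W
  have hfin : finrank (ZMod 2) (Fin (k + k) → ZMod 2) = k + k := Module.finrank_fin_fun (ZMod 2)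
  omega






lemma no_odd_IR (M N : BinMatroid) (hM : M.MemE 3) (hdim : N.dim = 3)
    (hodd : ¬ Even N.E.ncard) : ¬ M.HasIR N := by
  rintro ⟨φ, hinj, heq⟩
  have hr : finrank (ZMod 2) (LinearMap.range φ) = 3 := by
    rw [LinearMap.finrank_range_of_inj hinj, Module.finrank_fin_fun, hdim]
  have hev := hM (LinearMap.range φ) (by rw [hr])
  rw [LinearMap.coe_range, ← heq, Set.ncard_image_of_injective _ hinj] at hev
  exact hodd hev

lemma I3_ncard : I3.E.ncard = 3 := by
  have hfinj : Function.Injective (fun i : Fin 3 => (Pi.single i 1 : Fin 3 → ZMod 2)) := by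
    intro i j h
    by_contra hne
    have := congrFun h i
    simp only [Pi.single_eq_same, Pi.single_eq_of_ne hne] at this
    exact one_ne_zero this
  show (Set.range fun i : Fin 3 => (Pi.single i 1 : Fin 3 → ZMod 2)).ncard = 3
  rw [← Nat.card_coe_set_eq,
    Nat.card_range_of_injective hfinj, Nat.card_eq_fintype_card, Fintype.card_fin]

lemma F7_ncard : F7.E.ncard = 7 := by
  show ({v : Fin 3 → ZMod 2 | v ≠ 0}).ncard = 7
  rw [← Nat.card_coe_set_eq]
  rw [Nat.card_eq_fintype_card]
  rw [show (7 : ℕ) = Fintype.card (Fin 3 → ZMod 2) - Fintype.card {v : Fin 3 → ZMod 2 // v = 0}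
    from by rw [Fintype.card_subtype_eq, Fintype.card_fun]; simp]
  exact Fintype.card_subtype_compl _



end Stmt2Aux

/-- For every integer `k`, there is a matroid `M ∈ ℰ₃` containing
neither `I₃` nor `F₇` as an induced restriction such that `χ(M) ≥ k`. -/
theorem stmt2 (k : ℕ) :
    ∃ M : BinMatroid, M.MemE 3 ∧ ¬ M.HasIR I3 ∧ ¬ M.HasIR F7 ∧ k ≤ M.critNum := by
  refine ⟨⟨k + k, {v | QF k v = 1}, by simp [QF]⟩, ?_, ?_, ?_, ?_⟩
  case refine_1 =>
    intro W hW
    exact QF_even k W hW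
  case refine_2 =>
    refine no_odd_IR _ I3 (fun W hW => QF_even k W hW) rfl ?_
    rw [I3_ncard]
    decide
  case refine_3 =>
    refine no_odd_IR _ F7 (fun W hW => QF_even k W hW) rfl ?_
    rw [F7_ncard]
    decide
  case refine_4 =>
    apply le_csInf
    · refine ⟨k + k, ⊥, ?_, ?_⟩
      · simp
      · simp
    · rintro j ⟨W, hWr, hdisj⟩
      have hle := QF_rank k W hdisj
      simp only at hWr
      omega
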